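/- Let A : ℕ → ℝ be a nondecreasing sequence of arrival times with A(0) = 0, Q_i(n) ≥ 0 task service times and Z_i(n) ≥ 0 auxiliary times for i ∈ [1,k], n ≥ 1. Define the single-queue fork-join start-of-service times by V_1(1) = A(1), V_i(n) = max{ A(n), V_{i−1}(n) + Z_{i−1}(n) } for n ≥ 1 and i ∈ [2,k], and V_1(n) = max{ A(n), V_k(n−1) + Z_k(n−1) } for n ≥ 2; let the departure of job n be D(n) = max_{i ∈ [1,k]} { V_i(n) + Q_i(n) }. Then for all n ≥ 1 and i ∈ [1,k], V_i(n) = max_{m ∈ [1,n]} { A(m) + Σ_{j=1}^{i−1} Z_j(n) + Σ_{ν=m}^{n−1} Σ_{j=1}^{k} Z_j(ν) }, and consequently D(n) = max_{m ∈ [1,n]} { A(m) + S(m,n) } with S(m,n) = max_{i ∈ [1,k]} { Q_i(n) + Σ_{j=1}^{i−1} Z_j(n) + Σ_{ν=m}^{n−1} Σ_{j=1}^{k} Z_j(ν) }; that is, the single-queue fork-join system is an exact S(m,n) server. -/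

import Mathlib

/-- **A single-queue fork-join system is an exact max-plus server.**
Task `i` of job `n` starts service at `V i n`, following the recursion
`V 1 1 = A 1`, `V i n = max (A n) (V (i-1) n + Z (i-1) n)` for `i ∈ [2,k]`, and
`V 1 n = max (A n) (V k (n-1) + Z k (n-1))` for `n ≥ 2`; job `n` departs at
`D n = max_{i ∈ [1,k]} (V i n + Q i n)`.  Then
`V i n = max_{m ∈ [1,n]} (A m + ∑_{j=1}^{i-1} Z j n + ∑_{ν=m}^{n-1} ∑_{j=1}^{k} Z j ν)`
and `D n = max_{m ∈ [1,n]} (A m + S m n)` with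
`S(m,n) = max_{i ∈ [1,k]} (Q i n + ∑_{j=1}^{i-1} Z j n + ∑_{ν=m}^{n-1} ∑_{j=1}^{k} Z j ν)`. -/
theorem single_queue_forkjoin_exact_maxplus_server
    (k : ℕ) (hk : 1 ≤ k)
    (A : ℕ → ℝ) (Q Z : ℕ → ℕ → ℝ) (V : ℕ → ℕ → ℝ) (D : ℕ → ℝ)
    (hA0 : A 0 = 0) (hAmono : Monotone A)
    (hQ : ∀ i n, 0 ≤ Q i n) (hZ : ∀ i n, 0 ≤ Z i n)
    (hV11 : V 1 1 = A 1)
    (hVrec1 : ∀ n, 1 ≤ n → ∀ i, 2 ≤ i → i ≤ k →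
      V i n = max (A n) (V (i - 1) n + Z (i - 1) n))
    (hVrec2 : ∀ n, 2 ≤ n → V 1 n = max (A n) (V k (n - 1) + Z k (n - 1)))
    (hD : ∀ n, D n = (Finset.Icc 1 k).sup' (Finset.nonempty_Icc.mpr hk)
      (fun i => V i n + Q i n)) :
    ∀ n, ∀ hn : 1 ≤ n,
      (∀ i, 1 ≤ i → i ≤ k →
        V i n = (Finset.Icc 1 n).sup' (Finset.nonempty_Icc.mpr hn)
          (fun m => A m + ((∑ j ∈ Finset.Icc 1 (i - 1), Z j n)
            + ∑ ν ∈ Finset.Icc m (n - 1), ∑ j ∈ Finset.Icc 1 k, Z j ν))) ∧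
      D n = (Finset.Icc 1 n).sup' (Finset.nonempty_Icc.mpr hn)
        (fun m => A m + (Finset.Icc 1 k).sup' (Finset.nonempty_Icc.mpr hk)
          (fun i => Q i n + ((∑ j ∈ Finset.Icc 1 (i - 1), Z j n)
            + ∑ ν ∈ Finset.Icc m (n - 1), ∑ j ∈ Finset.Icc 1 k, Z j ν))) := by
  have hSnn : ∀ ν, (0:ℝ) ≤ ∑ j ∈ Finset.Icc 1 k, Z j ν :=
    fun ν => Finset.sum_nonneg fun j _ => hZ j ν
  have hCnn : ∀ i n, (0:ℝ) ≤ ∑ j ∈ Finset.Icc 1 i, Z j n :=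
    fun i n => Finset.sum_nonneg fun j _ => hZ j n
  have hTnn : ∀ m n, (0:ℝ) ≤ ∑ ν ∈ Finset.Icc m n, ∑ j ∈ Finset.Icc 1 k, Z j ν :=
    fun m n => Finset.sum_nonneg fun ν _ => hSnn ν
  -- splitting the Z-sum at the top index
  have hsplitC : ∀ i n, 1 ≤ i →
      (∑ j ∈ Finset.Icc 1 (i - 1), Z j n) + Z i n = ∑ j ∈ Finset.Icc 1 i, Z j n := by
    intro i n hi
    obtain ⟨i', rfl⟩ : ∃ i', i = i' + 1 := ⟨i - 1, by omega⟩
    rw [Nat.add_sub_cancel, ← Finset.insert_Icc_right_eq_Icc_add_one (show 1 ≤ i' + 1 by omega),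
      Finset.sum_insert (by simp)]
    ring
  -- splitting the big sum at the top index
  have hsplitT : ∀ m n, m ≤ n + 1 →
      (∑ ν ∈ Finset.Icc m n, ∑ j ∈ Finset.Icc 1 k, Z j ν)
        + ∑ j ∈ Finset.Icc 1 k, Z j (n + 1)
      = ∑ ν ∈ Finset.Icc m (n + 1), ∑ j ∈ Finset.Icc 1 k, Z j ν := by
    intro m n hm
    rw [← Finset.insert_Icc_right_eq_Icc_add_one hm, Finset.sum_insert (by simp)]
    ring
  -- the inner (i) induction step
  have stepI : ∀ n, 1 ≤ n → ∀ i, 1 ≤ i → i + 1 ≤ k → ∀ hn : 1 ≤ n,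
      V i n = (Finset.Icc 1 n).sup' (Finset.nonempty_Icc.mpr hn)
        (fun m => A m + ((∑ j ∈ Finset.Icc 1 (i - 1), Z j n)
          + ∑ ν ∈ Finset.Icc m (n - 1), ∑ j ∈ Finset.Icc 1 k, Z j ν)) →
      V (i + 1) n = (Finset.Icc 1 n).sup' (Finset.nonempty_Icc.mpr hn)
        (fun m => A m + ((∑ j ∈ Finset.Icc 1 i, Z j n)
          + ∑ ν ∈ Finset.Icc m (n - 1), ∑ j ∈ Finset.Icc 1 k, Z j ν)) := by
    intro n hn1 i hi1 hik hn IH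
    rw [hVrec1 n hn1 (i + 1) (by omega) hik, Nat.add_sub_cancel, IH, Finset.sup'_add]
    have hcong : ∀ m ∈ Finset.Icc 1 n,
        (A m + ((∑ j ∈ Finset.Icc 1 (i - 1), Z j n)
          + ∑ ν ∈ Finset.Icc m (n - 1), ∑ j ∈ Finset.Icc 1 k, Z j ν)) + Z i n
        = A m + ((∑ j ∈ Finset.Icc 1 i, Z j n)
          + ∑ ν ∈ Finset.Icc m (n - 1), ∑ j ∈ Finset.Icc 1 k, Z j ν) := by
      intro m _
      rw [← hsplitC i n hi1]; ring
    rw [Finset.sup'_congr (Finset.nonempty_Icc.mpr hn) rfl hcong]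
    refine max_eq_right ?_
    have hmem : n ∈ Finset.Icc 1 n := by simp [hn]
    have h := Finset.le_sup' (f := fun m => A m + ((∑ j ∈ Finset.Icc 1 i, Z j n)
      + ∑ ν ∈ Finset.Icc m (n - 1), ∑ j ∈ Finset.Icc 1 k, Z j ν)) hmem
    have h1 := hCnn i n
    have h2 := hTnn n (n - 1)
    linarith
  -- closed form for V
  have Vform : ∀ n, ∀ hn : 1 ≤ n, ∀ i, 1 ≤ i → i ≤ k →
      V i n = (Finset.Icc 1 n).sup' (Finset.nonempty_Icc.mpr hn)
        (fun m => A m + ((∑ j ∈ Finset.Icc 1 (i - 1), Z j n)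
          + ∑ ν ∈ Finset.Icc m (n - 1), ∑ j ∈ Finset.Icc 1 k, Z j ν)) := by
    intro n hn
    induction n, hn using Nat.le_induction with
    | base =>
      intro i hi1
      induction i, hi1 using Nat.le_induction with
      | base =>
        intro _
        have hc : ∀ m ∈ Finset.Icc 1 1,
            (fun m => A m + ((∑ j ∈ Finset.Icc 1 (1 - 1), Z j 1)
              + ∑ ν ∈ Finset.Icc m (1 - 1), ∑ j ∈ Finset.Icc 1 k, Z j ν)) m
            = (fun _ => A 1) m := by
          intro m hm
          simp only [Finset.mem_Icc] at hm
          obtain rfl : m = 1 := by omega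
          rw [Finset.Icc_eq_empty (show ¬(1:ℕ) ≤ 1 - 1 by omega)]
          simp
        rw [hV11, Finset.sup'_congr (Finset.nonempty_Icc.mpr le_rfl) rfl hc,
          Finset.sup'_const]
      | succ i hi IH =>
        intro hik
        exact stepI 1 le_rfl i hi hik le_rfl (IH (by omega))
    | succ n hn ihn =>
      intro i hi1
      induction i, hi1 using Nat.le_induction with
      | base =>
        intro _
        have hcong : ∀ m ∈ Finset.Icc 1 n,
            (A m + ((∑ j ∈ Finset.Icc 1 (k - 1), Z j n)
              + ∑ ν ∈ Finset.Icc m (n - 1), ∑ j ∈ Finset.Icc 1 k, Z j ν)) + Z k n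
            = A m + ((∑ j ∈ Finset.Icc 1 (1 - 1), Z j (n + 1))
              + ∑ ν ∈ Finset.Icc m (n + 1 - 1), ∑ j ∈ Finset.Icc 1 k, Z j ν) := by
          intro m hm
          simp only [Finset.mem_Icc] at hm
          simp only [Nat.add_sub_cancel]
          rw [Finset.Icc_eq_empty (show ¬(1:ℕ) ≤ 1 - 1 by omega), Finset.sum_empty]
          have h1 := hsplitC k n hk
          have h2 : (∑ ν ∈ Finset.Icc m (n - 1), ∑ j ∈ Finset.Icc 1 k, Z j ν)
              + ∑ j ∈ Finset.Icc 1 k, Z j n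
              = ∑ ν ∈ Finset.Icc m n, ∑ j ∈ Finset.Icc 1 k, Z j ν := by
            obtain ⟨n', rfl⟩ : ∃ n', n = n' + 1 := ⟨n - 1, by omega⟩
            simp only [Nat.add_sub_cancel]
            exact hsplitT m n' hm.2
          linarith
        have hins := Finset.sup'_congr
          (s := insert (n + 1) (Finset.Icc 1 n))
          (f := fun m => A m + ((∑ j ∈ Finset.Icc 1 (1 - 1), Z j (n + 1))
            + ∑ ν ∈ Finset.Icc m n, ∑ j ∈ Finset.Icc 1 k, Z j ν))
          (g := fun m => A m + ((∑ j ∈ Finset.Icc 1 (1 - 1), Z j (n + 1))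
            + ∑ ν ∈ Finset.Icc m n, ∑ j ∈ Finset.Icc 1 k, Z j ν))
          (Finset.insert_nonempty _ _) (Finset.insert_Icc_right_eq_Icc_add_one (by omega))
          (fun x _ => rfl)
        rw [hVrec2 (n + 1) (by omega), Nat.add_sub_cancel, ihn k hk le_rfl,
          Finset.sup'_add, Finset.sup'_congr (Finset.nonempty_Icc.mpr hn) rfl hcong,
          ← hins, Finset.sup'_insert]
        congr 1
        rw [Finset.Icc_eq_empty (show ¬(n + 1:ℕ) ≤ n by omega),
          Finset.Icc_eq_empty (show ¬(1:ℕ) ≤ 1 - 1 by omega)]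
        simp
        exact Finset.nonempty_Icc.mpr hn
      | succ i hi IH =>
        intro hik
        exact stepI (n + 1) (by omega) i hi hik (by omega) (IH (by omega))
  -- conclusion
  intro n hn
  refine ⟨Vform n hn, ?_⟩
  rw [hD n]
  have hVQ : ∀ i ∈ Finset.Icc 1 k,
      V i n + Q i n = (Finset.Icc 1 n).sup' (Finset.nonempty_Icc.mpr hn)
        (fun m => A m + (Q i n + ((∑ j ∈ Finset.Icc 1 (i - 1), Z j n)
          + ∑ ν ∈ Finset.Icc m (n - 1), ∑ j ∈ Finset.Icc 1 k, Z j ν))) := by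
    intro i hi
    simp only [Finset.mem_Icc] at hi
    rw [Vform n hn i hi.1 hi.2, Finset.sup'_add]
    exact Finset.sup'_congr _ rfl (fun m _ => by ring)
  rw [Finset.sup'_congr (Finset.nonempty_Icc.mpr hk) rfl hVQ, Finset.sup'_comm]
  simp only [Finset.add_sup']
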